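/- For a ∈ (0,1) and λ > 0, let α*(a, λ) be the unique maximizer on (0,1) of g(α) = log α − λ·KL(Ber(α)‖Ber(a)). Then α*(a, λ) is strictly increasing in a: if 0 < a₁ < a₂ < 1 then α*(a₁, λ) < α*(a₂, λ). -/

import Mathlib

/-- g(α) = log α − λ·KL(Ber(α)‖Ber(a)). -/
noncomputable def g (lam a : ℝ) : ℝ → ℝ :=
  fun α => Real.log α -
    lam * (α * Real.log (α / a) + (1 - α) * Real.log ((1 - α) / (1 - a)))

lemma g_deriv (lam a α : ℝ) (ha : a ∈ Set.Ioo (0:ℝ) 1) (hα : α ∈ Set.Ioo (0:ℝ) 1) :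
    HasDerivAt (g lam a)
      (1/α - lam * ((Real.log α - Real.log (1-α)) - (Real.log a - Real.log (1-a)))) α := by
  obtain ⟨hα0, hα1⟩ := hα
  obtain ⟨ha0, ha1⟩ := ha
  have hαne : α ≠ 0 := ne_of_gt hα0
  have h1αne : (1:ℝ) - α ≠ 0 := by linarith
  -- derivative of the rewritten function
  have h1 : HasDerivAt Real.log (1/α) α := by
    simpa [one_div] using Real.hasDerivAt_log hαne
  have h2 : HasDerivAt (fun x => x * (Real.log x - Real.log a))
      (1 * (Real.log α - Real.log a) + α * (1/α)) α := by
    exact (hasDerivAt_id α).mul (by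
      simpa [one_div] using (Real.hasDerivAt_log hαne).sub_const (Real.log a))
  have h3 : HasDerivAt (fun x => Real.log (1 - x)) (-(1/(1-α))) α := by
    have hin : HasDerivAt (fun x : ℝ => 1 - x) (-1) α := by
      simpa using (hasDerivAt_id' α).const_sub (1:ℝ)
    have := (Real.hasDerivAt_log h1αne).comp α hin
    simpa [one_div, Function.comp_def] using this.neg.neg
  have h4 : HasDerivAt (fun x => (1 - x) * (Real.log (1-x) - Real.log (1-a)))
      ((-1) * (Real.log (1-α) - Real.log (1-a)) + (1-α) * (-(1/(1-α)))) α := by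
    have hin : HasDerivAt (fun x : ℝ => 1 - x) (-1) α := by
      simpa using (hasDerivAt_id' α).const_sub (1:ℝ)
    exact hin.mul (h3.sub_const (Real.log (1-a)))
  have hφ : HasDerivAt (fun x => Real.log x -
      lam * (x * (Real.log x - Real.log a) + (1-x) * (Real.log (1-x) - Real.log (1-a))))
      (1/α - lam * ((1 * (Real.log α - Real.log a) + α * (1/α)) +
        ((-1) * (Real.log (1-α) - Real.log (1-a)) + (1-α) * (-(1/(1-α)))))) α :=
    h1.sub ((h2.add h4).const_mul lam)
  have heq : g lam a =ᶠ[nhds α] (fun x => Real.log x -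
      lam * (x * (Real.log x - Real.log a) + (1-x) * (Real.log (1-x) - Real.log (1-a)))) := by
    filter_upwards [isOpen_Ioo.mem_nhds (⟨hα0, hα1⟩ : α ∈ Set.Ioo (0:ℝ) 1)] with x hx
    have hx0 : x ≠ 0 := ne_of_gt hx.1
    have hx1 : (1:ℝ) - x ≠ 0 := by have := hx.2; intro h; linarith
    simp only [g, Real.log_div hx0 (ne_of_gt ha0),
      Real.log_div hx1 (by intro h; linarith : (1:ℝ) - a ≠ 0)]
  have hd := hφ.congr_of_eventuallyEq heq
  refine hd.congr_deriv ?_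
  have hαne' : α ≠ 0 := hαne
  simp only [mul_neg, mul_one_div_cancel hαne, mul_one_div_cancel h1αne]
  ring

lemma foc (lam a α : ℝ) (ha : a ∈ Set.Ioo (0:ℝ) 1) (hα : α ∈ Set.Ioo (0:ℝ) 1)
    (hmax : ∀ β ∈ Set.Ioo (0:ℝ) 1, g lam a β ≤ g lam a α) :
    1/α = lam * ((Real.log α - Real.log (1-α)) - (Real.log a - Real.log (1-a))) := by
  have hloc : IsLocalMax (g lam a) α := by
    filter_upwards [isOpen_Ioo.mem_nhds hα] with x hx using hmax x hx
  have := hloc.hasDerivAt_eq_zero (g_deriv lam a α ha hα)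
  linarith

/-- The maximizer α*(a, λ) is strictly increasing in the starting mass a. -/
theorem maximizer_monotone_in_start
    (lam : ℝ) (hlam : 0 < lam)
    (a₁ a₂ : ℝ) (ha₁ : a₁ ∈ Set.Ioo (0:ℝ) 1) (ha₂ : a₂ ∈ Set.Ioo (0:ℝ) 1)
    (h12 : a₁ < a₂)
    (α₁ α₂ : ℝ) (hα₁ : α₁ ∈ Set.Ioo (0:ℝ) 1) (hα₂ : α₂ ∈ Set.Ioo (0:ℝ) 1)
    (hmax₁ : ∀ β ∈ Set.Ioo (0:ℝ) 1, g lam a₁ β ≤ g lam a₁ α₁)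
    (hmax₂ : ∀ β ∈ Set.Ioo (0:ℝ) 1, g lam a₂ β ≤ g lam a₂ α₂) :
    α₁ < α₂ := by
  have e1 := foc lam a₁ α₁ ha₁ hα₁ hmax₁
  have e2 := foc lam a₂ α₂ ha₂ hα₂ hmax₂
  by_contra h
  push_neg at h  -- α₂ ≤ α₁
  -- logit a₁ < logit a₂
  have hla : Real.log a₁ - Real.log (1-a₁) < Real.log a₂ - Real.log (1-a₂) := by
    have h1 : Real.log a₁ < Real.log a₂ := Real.log_lt_log ha₁.1 h12
    have h2 : Real.log (1-a₂) < Real.log (1-a₁) :=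
      Real.log_lt_log (by linarith [ha₂.2]) (by linarith)
    linarith
  have hlα : Real.log α₂ - Real.log (1-α₂) ≤ Real.log α₁ - Real.log (1-α₁) := by
    have h1 : Real.log α₂ ≤ Real.log α₁ := Real.log_le_log hα₂.1 h
    have h2 : Real.log (1-α₁) ≤ Real.log (1-α₂) :=
      Real.log_le_log (by linarith [hα₁.2]) (by linarith)
    linarith
  -- 1/α₁ ≤ 1/α₂
  have hinv : 1/α₁ ≤ 1/α₂ := one_div_le_one_div_of_le hα₂.1 h
  have : lam * ((Real.log α₂ - Real.log (1-α₂)) - (Real.log a₂ - Real.log (1-a₂))) <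
      lam * ((Real.log α₁ - Real.log (1-α₁)) - (Real.log a₁ - Real.log (1-a₁))) := by
    apply mul_lt_mul_of_pos_left _ hlam
    linarith
  linarith
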